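/- For n ≥ 3, the outer mutual-visibility number of L(K_n) equals ex(n; K_4^-), the maximum number of edges of an n-vertex graph with no subgraph isomorphic to K_4 minus an edge. -/

import Mathlib

namespace MutualVisibility

open SimpleGraph

variable {V W : Type*}

/-- `x` and `y` are `X`-visible in `G`: there is a shortest `x,y`-path all of whose
internal vertices avoid `X`. -/
def Visible (G : SimpleGraph V) (X : Set V) (x y : V) : Prop :=
  ∃ p : G.Walk x y, p.length = G.dist x y ∧ ∀ v ∈ p.support, v ≠ x → v ≠ y → v ∉ X

/-- `X` is a mutual-visibility set: any two vertices of `X` are `X`-visible. -/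
def IsMutualVisSet (G : SimpleGraph V) (X : Set V) : Prop :=
  ∀ x ∈ X, ∀ y ∈ X, Visible G X x y

/-- outer mutual-visibility set -/
def IsOuterMutualVisSet (G : SimpleGraph V) (X : Set V) : Prop :=
  IsMutualVisSet G X ∧ ∀ x ∈ X, ∀ y ∉ X, Visible G X x y

/-- dual mutual-visibility set -/
def IsDualMutualVisSet (G : SimpleGraph V) (X : Set V) : Prop :=
  IsMutualVisSet G X ∧ ∀ x ∉ X, ∀ y ∉ X, Visible G X x y

/-- total mutual-visibility set -/
def IsTotalMutualVisSet (G : SimpleGraph V) (X : Set V) : Prop :=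
  ∀ x y : V, Visible G X x y

/-- mutual-visibility number μ(G) -/
noncomputable def mu (G : SimpleGraph V) : ℕ :=
  sSup {k | ∃ X : Set V, IsMutualVisSet G X ∧ X.ncard = k}

/-- outer mutual-visibility number μ_o(G) -/
noncomputable def muOuter (G : SimpleGraph V) : ℕ :=
  sSup {k | ∃ X : Set V, IsOuterMutualVisSet G X ∧ X.ncard = k}

/-- dual mutual-visibility number μ_d(G) -/
noncomputable def muDual (G : SimpleGraph V) : ℕ :=
  sSup {k | ∃ X : Set V, IsDualMutualVisSet G X ∧ X.ncard = k}

/-- total mutual-visibility number μ_t(G) -/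
noncomputable def muTotal (G : SimpleGraph V) : ℕ :=
  sSup {k | ∃ X : Set V, IsTotalMutualVisSet G X ∧ X.ncard = k}

/-- `H` contains a subgraph copy of `F`. -/
def ContainsCopy (F : SimpleGraph W) (H : SimpleGraph V) : Prop :=
  ∃ f : W → V, Function.Injective f ∧ ∀ a b, F.Adj a b → H.Adj (f a) (f b)

/-- The Turán number ex(n; F): max number of edges of an `n`-vertex graph with no copy of `F`. -/
noncomputable def exNum (n : ℕ) (F : SimpleGraph W) : ℕ :=
  sSup {k | ∃ H : SimpleGraph (Fin n), ¬ ContainsCopy F H ∧ H.edgeSet.ncard = k}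

/-- The direct (tensor/categorical) product of graphs. -/
def directProd (G : SimpleGraph V) (H : SimpleGraph W) : SimpleGraph (V × W) where
  Adj x y := G.Adj x.1 y.1 ∧ H.Adj x.2 y.2
  symm := ⟨fun _ _ h => ⟨h.1.symm, h.2.symm⟩⟩
  loopless := ⟨fun x h => G.loopless.irrefl x.1 h.1⟩

/-- The join `G + H` of two graphs. -/
def graphJoin (G : SimpleGraph V) (H : SimpleGraph W) : SimpleGraph (V ⊕ W) where
  Adj u v := match u, v with
    | Sum.inl a, Sum.inl b => G.Adj a b
    | Sum.inr a, Sum.inr b => H.Adj a b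
    | _, _ => True
  symm := ⟨fun u v => match u, v with
    | Sum.inl _, Sum.inl _ => fun h => G.symm.symm _ _ h
    | Sum.inr _, Sum.inr _ => fun h => H.symm.symm _ _ h
    | Sum.inl _, Sum.inr _ => fun _ => trivial
    | Sum.inr _, Sum.inl _ => fun _ => trivial⟩
  loopless := ⟨fun u => match u with
    | Sum.inl a => G.loopless.irrefl a
    | Sum.inr a => H.loopless.irrefl a⟩

/-- A big-μ graph: `G = (K_1 ∪ K_t) + H` for some `t ≥ 0` and some graph `H`. -/
def IsBigMu {V : Type} (G : SimpleGraph V) : Prop :=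
  ∃ (t : ℕ) (W : Type) (H : SimpleGraph W),
    Nonempty (G ≃g graphJoin ((⊤ : SimpleGraph (Fin 1)) ⊕g (⊤ : SimpleGraph (Fin t))) H)

/-- A cograph: a graph with no induced path on four vertices. -/
def IsCograph (G : SimpleGraph V) : Prop :=
  ¬ ∃ f : Fin 4 → V, Function.Injective f ∧
      ∀ a b, (pathGraph 4).Adj a b ↔ G.Adj (f a) (f b)

/-- The Petersen graph, realized as the Kneser graph K(5,2). -/
def petersen : SimpleGraph {s : Finset (Fin 5) // s.card = 2} where
  Adj a b := Disjoint a.1 b.1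
  symm := ⟨fun _ _ h => h.symm⟩
  loopless := ⟨by
    rintro ⟨s, hs⟩ h
    rw [disjoint_self, Finset.bot_eq_empty] at h
    subst h
    simp at hs⟩

section Basics
variable {G : SimpleGraph V} {X : Set V}

lemma visible_self (x : V) : Visible G X x x :=
  ⟨Walk.nil, by simp [SimpleGraph.dist_self], by simp⟩

lemma visible_of_adj {x y : V} (h : G.Adj x y) : Visible G X x y := by
  refine ⟨Walk.cons h Walk.nil, by simp [SimpleGraph.dist_eq_one_iff_adj.2 h], ?_⟩
  intro v hv h1 h2
  simp [Walk.support_cons] at hv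
  tauto

lemma dist_eq_two {x y g : V} (hne : x ≠ y) (hna : ¬ G.Adj x y)
    (h1 : G.Adj x g) (h2 : G.Adj g y) : G.dist x y = 2 := by
  have hle : G.dist x y ≤ 2 := by
    have := SimpleGraph.dist_le (Walk.cons h1 (Walk.cons h2 Walk.nil))
    simpa using this
  have hr : G.Reachable x y := ⟨Walk.cons h1 (Walk.cons h2 Walk.nil)⟩
  have h0 : G.dist x y ≠ 0 := by
    intro h
    exact hne (hr.dist_eq_zero_iff.mp h ▸ rfl)
  have hone : G.dist x y ≠ 1 := fun h => hna (SimpleGraph.dist_eq_one_iff_adj.mp h)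
  omega

lemma visible_of_mid {x y g : V} (hne : x ≠ y) (hna : ¬ G.Adj x y)
    (h1 : G.Adj x g) (h2 : G.Adj g y) (hg : g ∉ X) : Visible G X x y := by
  refine ⟨Walk.cons h1 (Walk.cons h2 Walk.nil), by simp [dist_eq_two hne hna h1 h2], ?_⟩
  intro v hv hx hy
  simp [Walk.support_cons] at hv
  rcases hv with rfl|rfl|rfl <;> simp_all

lemma exists_mid_of_visible {x y : V} (hd : G.dist x y = 2)
    (h : Visible G X x y) : ∃ g, G.Adj x g ∧ G.Adj g y ∧ g ∉ X := by
  obtain ⟨p, hlen, hsup⟩ := h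
  rw [hd] at hlen
  have h1 : G.Adj x (p.getVert 1) := by
    have := SimpleGraph.Walk.adj_getVert_succ p (i := 0) (by omega)
    simpa using this
  have h2 : G.Adj (p.getVert 1) y := by
    have := SimpleGraph.Walk.adj_getVert_succ p (i := 1) (by omega)
    rw [show (1:ℕ)+1 = p.length by omega] at this
    simpa [Walk.getVert_length] using this
  have hgy : p.getVert 1 ≠ y := by
    intro hh
    rw [hh] at h1
    rw [dist_eq_one_iff_adj.mpr h1] at hd
    exact absurd hd (by norm_num)
  exact ⟨p.getVert 1, h1, h2,
    hsup _ (SimpleGraph.Walk.mem_support_iff_exists_getVert.mpr ⟨1, rfl, by omega⟩) h1.ne' hgy⟩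

end Basics

section LK
variable {n : ℕ}

/-- The "forbidden configuration" in `X ⊆ E(K_n)`: an edge `ab ∈ X` and a disjoint pair `cd`
all of whose four connecting edges lie in `X`. -/
def BadConfig (X : Set (⊤ : SimpleGraph (Fin n)).edgeSet) : Prop :=
  ∃ a b c d : Fin n, a ≠ b ∧ a ≠ c ∧ a ≠ d ∧ b ≠ c ∧ b ≠ d ∧ c ≠ d ∧
    s(a,b) ∈ Subtype.val '' X ∧ s(a,c) ∈ Subtype.val '' X ∧ s(a,d) ∈ Subtype.val '' X ∧
    s(b,c) ∈ Subtype.val '' X ∧ s(b,d) ∈ Subtype.val '' X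

lemma mem_edgeSet_top {a b : Fin n} (h : a ≠ b) : s(a,b) ∈ (⊤ : SimpleGraph (Fin n)).edgeSet := by
  rw [mem_edgeSet, top_adj]; exact h

lemma mem_of_val_mem {X : Set (⊤ : SimpleGraph (Fin n)).edgeSet}
    {g : (⊤ : SimpleGraph (Fin n)).edgeSet} (h : ↑g ∈ Subtype.val '' X) : g ∈ X := by
  obtain ⟨e', he', heq⟩ := h
  rwa [Subtype.val_injective heq] at he'

lemma disj_of_not_adj {e f : (⊤ : SimpleGraph (Fin n)).edgeSet} (hef : e ≠ f)
    (hna : ¬ (⊤ : SimpleGraph (Fin n)).lineGraph.Adj e f) :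
    ∀ v, v ∈ (e : Sym2 (Fin n)) → v ∉ (f : Sym2 (Fin n)) := fun v hv hvf =>
  hna (lineGraph_adj_iff_exists.mpr ⟨hef, v, hv, hvf⟩)

lemma edge_rep (e : (⊤ : SimpleGraph (Fin n)).edgeSet) :
    ∃ a b : Fin n, a ≠ b ∧ (e : Sym2 (Fin n)) = s(a,b) := by
  obtain ⟨z, hz⟩ := e
  induction z using Sym2.ind with
  | _ a b => exact ⟨a, b, by simpa using hz, rfl⟩

lemma visible_cross {X : Set (⊤ : SimpleGraph (Fin n)).edgeSet}
    {e f : (⊤ : SimpleGraph (Fin n)).edgeSet} (hef : e ≠ f)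
    (hna : ¬ (⊤ : SimpleGraph (Fin n)).lineGraph.Adj e f) {u v : Fin n}
    (hu : u ∈ (e : Sym2 (Fin n))) (hv : v ∈ (f : Sym2 (Fin n)))
    (hnx : s(u,v) ∉ Subtype.val '' X) :
    Visible (⊤ : SimpleGraph (Fin n)).lineGraph X e f := by
  have huv : u ≠ v := fun h => disj_of_not_adj hef hna u hu (h ▸ hv)
  set g : (⊤ : SimpleGraph (Fin n)).edgeSet := ⟨s(u,v), mem_edgeSet_top huv⟩ with hgdef
  have hveg : v ∉ (e : Sym2 (Fin n)) := fun hh => disj_of_not_adj hef hna v hh hv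
  have heg : e ≠ g := fun h => hveg (by rw [h]; simp [hgdef])
  have huf : u ∉ (f : Sym2 (Fin n)) := fun hh => disj_of_not_adj hef hna u hu hh
  have hgf : g ≠ f := fun h => huf (by rw [← h]; simp [hgdef])
  have a1 : (⊤ : SimpleGraph (Fin n)).lineGraph.Adj e g :=
    lineGraph_adj_iff_exists.mpr ⟨heg, u, hu, by simp [hgdef]⟩
  have a2 : (⊤ : SimpleGraph (Fin n)).lineGraph.Adj g f :=
    lineGraph_adj_iff_exists.mpr ⟨hgf, v, by simp [hgdef], hv⟩
  have hgX : g ∉ X := fun h => hnx ⟨g, h, rfl⟩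
  exact visible_of_mid hef hna a1 a2 hgX

lemma outerMV_iff (X : Set (⊤ : SimpleGraph (Fin n)).edgeSet) :
    IsOuterMutualVisSet (⊤ : SimpleGraph (Fin n)).lineGraph X ↔ ¬ BadConfig X := by
  constructor
  · rintro h ⟨a, b, c, d, hab, hac, had, hbc, hbd, hcd, m1, m2, m3, m4, m5⟩
    have heX : (⟨s(a,b), mem_edgeSet_top hab⟩ : (⊤ : SimpleGraph (Fin n)).edgeSet) ∈ X :=
      mem_of_val_mem m1
    set e : (⊤ : SimpleGraph (Fin n)).edgeSet := ⟨s(a,b), mem_edgeSet_top hab⟩ with hedef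
    set f : (⊤ : SimpleGraph (Fin n)).edgeSet := ⟨s(c,d), mem_edgeSet_top hcd⟩ with hfdef
    have hef : e ≠ f := by
      simp only [hedef, hfdef, ne_eq, Subtype.mk.injEq, Sym2.eq_iff]
      rintro (⟨h1, h2⟩ | ⟨h1, h2⟩)
      exacts [hac h1, had h1]
    have hna : ¬ (⊤ : SimpleGraph (Fin n)).lineGraph.Adj e f := by
      rw [lineGraph_adj_iff_exists]
      rintro ⟨-, v, hv1, hv2⟩
      simp only [hedef, hfdef, Sym2.mem_iff] at hv1 hv2
      rcases hv1 with rfl | rfl <;> rcases hv2 with rfl | rfl <;> simp_all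
    have hgeac : e ≠ ⟨s(a,c), mem_edgeSet_top hac⟩ := by
      simp only [hedef, ne_eq, Subtype.mk.injEq, Sym2.eq_iff]
      rintro (⟨h1, h2⟩ | ⟨h1, h2⟩) <;> simp_all
    have hgfac : (⟨s(a,c), mem_edgeSet_top hac⟩ : (⊤ : SimpleGraph (Fin n)).edgeSet) ≠ f := by
      simp only [hfdef, ne_eq, Subtype.mk.injEq, Sym2.eq_iff]
      rintro (⟨h1, h2⟩ | ⟨h1, h2⟩) <;> simp_all
    have hd2 : (⊤ : SimpleGraph (Fin n)).lineGraph.dist e f = 2 := by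
      refine dist_eq_two hef hna (g := ⟨s(a,c), mem_edgeSet_top hac⟩)
        (lineGraph_adj_iff_exists.mpr ⟨hgeac, a, by simp [hedef], by simp⟩)
        (lineGraph_adj_iff_exists.mpr ⟨hgfac, c, by simp, by simp [hfdef]⟩)
    have hvis : Visible (⊤ : SimpleGraph (Fin n)).lineGraph X e f := by
      by_cases hfX : f ∈ X
      · exact h.1 e heX f hfX
      · exact h.2 e heX f hfX
    obtain ⟨g, hg1, hg2, hgX⟩ := exists_mid_of_visible hd2 hvis
    obtain ⟨-, u, hue, hug⟩ := lineGraph_adj_iff_exists.mp hg1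
    obtain ⟨-, w, hwg, hwf⟩ := lineGraph_adj_iff_exists.mp hg2
    simp only [hedef, Sym2.mem_iff] at hue
    simp only [hfdef, Sym2.mem_iff] at hwf
    have huw : u ≠ w := by
      rcases hue with rfl | rfl <;> rcases hwf with rfl | rfl <;> assumption
    have hgval : (g : Sym2 (Fin n)) = s(u,w) := (Sym2.mem_and_mem_iff huw).mp ⟨hug, hwg⟩
    apply hgX
    apply mem_of_val_mem
    rw [hgval]
    rcases hue with rfl | rfl <;> rcases hwf with rfl | rfl <;> assumption
  · intro hnb
    have main : ∀ e ∈ X, ∀ f, Visible (⊤ : SimpleGraph (Fin n)).lineGraph X e f := by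
      intro e heX f
      by_cases hef : e = f
      · exact hef ▸ visible_self e
      by_cases hadj : (⊤ : SimpleGraph (Fin n)).lineGraph.Adj e f
      · exact visible_of_adj hadj
      obtain ⟨a, b, hab, he⟩ := edge_rep e
      obtain ⟨c, d, hcd, hf⟩ := edge_rep f
      have hae : a ∈ (e : Sym2 (Fin n)) := by rw [he]; simp
      have hbe : b ∈ (e : Sym2 (Fin n)) := by rw [he]; simp
      have hcf : c ∈ (f : Sym2 (Fin n)) := by rw [hf]; simp
      have hdf : d ∈ (f : Sym2 (Fin n)) := by rw [hf]; simp
      have disj := disj_of_not_adj hef hadj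
      have hac : a ≠ c := fun h => disj a hae (h ▸ hcf)
      have had : a ≠ d := fun h => disj a hae (h ▸ hdf)
      have hbc : b ≠ c := fun h => disj b hbe (h ▸ hcf)
      have hbd : b ≠ d := fun h => disj b hbe (h ▸ hdf)
      by_cases k1 : s(a,c) ∈ Subtype.val '' X
      · by_cases k2 : s(a,d) ∈ Subtype.val '' X
        · by_cases k3 : s(b,c) ∈ Subtype.val '' X
          · by_cases k4 : s(b,d) ∈ Subtype.val '' X
            · exact absurd ⟨a, b, c, d, hab, hac, had, hbc, hbd, hcd,
                ⟨e, heX, he⟩, k1, k2, k3, k4⟩ hnb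
            · exact visible_cross hef hadj hbe hdf k4
          · exact visible_cross hef hadj hbe hcf k3
        · exact visible_cross hef hadj hae hdf k2
      · exact visible_cross hef hadj hae hcf k1
    exact ⟨fun x hx y _ => main x hx y, fun x hx y _ => main x hx y⟩

end LK

section Corr
variable {n : ℕ}

lemma not_copy_of_not_bad {X : Set (⊤ : SimpleGraph (Fin n)).edgeSet} (hnb : ¬ BadConfig X) :
    ¬ ContainsCopy ((⊤ : SimpleGraph (Fin 4)).deleteEdges {s(0, 1)})
      (fromEdgeSet (Subtype.val '' X)) := by
  rintro ⟨φ, hinj, hadj⟩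
  apply hnb
  have FAdj : ∀ i j : Fin 4, i ≠ j → s(i,j) ≠ s(0,1) →
      ((⊤ : SimpleGraph (Fin 4)).deleteEdges {s(0, 1)}).Adj i j := by
    intro i j h1 h2
    simp [deleteEdges_adj, h1, h2]
  have h23 := hadj 2 3 (FAdj 2 3 (by decide) (by simp [Sym2.eq_iff]))
  have h02 := hadj 0 2 (FAdj 0 2 (by decide) (by simp [Sym2.eq_iff]))
  have h03 := hadj 0 3 (FAdj 0 3 (by decide) (by simp [Sym2.eq_iff]))
  have h12 := hadj 1 2 (FAdj 1 2 (by decide) (by simp [Sym2.eq_iff]))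
  have h13 := hadj 1 3 (FAdj 1 3 (by decide) (by simp [Sym2.eq_iff]))
  rw [fromEdgeSet_adj] at h23 h02 h03 h12 h13
  refine ⟨φ 2, φ 3, φ 0, φ 1, h23.2, ?_, ?_, ?_, ?_, ?_, h23.1, ?_, ?_, ?_, ?_⟩
  · exact fun h => absurd (hinj h) (by decide)
  · exact fun h => absurd (hinj h) (by decide)
  · exact fun h => absurd (hinj h) (by decide)
  · exact fun h => absurd (hinj h) (by decide)
  · exact fun h => absurd (hinj h) (by decide)
  · have := h02.1; rwa [Sym2.eq_swap] at this
  · have := h12.1; rwa [Sym2.eq_swap] at this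
  · have := h03.1; rwa [Sym2.eq_swap] at this
  · have := h13.1; rwa [Sym2.eq_swap] at this

lemma image_preimage_val (H : SimpleGraph (Fin n)) :
    Subtype.val '' (Subtype.val ⁻¹' H.edgeSet : Set (⊤ : SimpleGraph (Fin n)).edgeSet)
      = H.edgeSet := by
  rw [Set.image_preimage_eq_inter_range, Subtype.range_val]
  exact Set.inter_eq_left.mpr (edgeSet_mono le_top)

lemma not_bad_of_not_copy {H : SimpleGraph (Fin n)}
    (hnc : ¬ ContainsCopy ((⊤ : SimpleGraph (Fin 4)).deleteEdges {s(0, 1)}) H) :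
    ¬ BadConfig (Subtype.val ⁻¹' H.edgeSet) := by
  rintro ⟨a, b, c, d, hab, hac, had, hbc, hbd, hcd, m1, m2, m3, m4, m5⟩
  rw [image_preimage_val, mem_edgeSet] at m1 m2 m3 m4 m5
  apply hnc
  refine ⟨![c, d, a, b], ?_, ?_⟩
  · intro i j hij
    fin_cases i <;> fin_cases j <;> simp_all
  · have sab := m1.symm
    have sac := m2.symm
    have sad := m3.symm
    have sbc := m4.symm
    have sbd := m5.symm
    intro i j hF
    fin_cases i <;> fin_cases j <;> simp_all [Sym2.eq_iff]

end Corr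

theorem muOuter_lineGraph_complete_eq_ex_K4_minus (n : ℕ) (hn : 3 ≤ n) :
    muOuter (⊤ : SimpleGraph (Fin n)).lineGraph
      = exNum n ((⊤ : SimpleGraph (Fin 4)).deleteEdges {s(0, 1)}) := by
  unfold muOuter exNum
  congr 1
  ext k
  simp only [Set.mem_setOf_eq]
  constructor
  · rintro ⟨X, hX, rfl⟩
    refine ⟨fromEdgeSet (Subtype.val '' X), not_copy_of_not_bad ((outerMV_iff X).mp hX), ?_⟩
    have hdiag : Subtype.val '' X \ {e : Sym2 (Fin n) | e.IsDiag} = Subtype.val '' X := by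
      ext z
      refine ⟨fun h => h.1, fun hz => ⟨hz, ?_⟩⟩
      obtain ⟨⟨w, hw⟩, -, rfl⟩ := hz
      exact (⊤ : SimpleGraph (Fin n)).not_isDiag_of_mem_edgeSet hw
    rw [edgeSet_fromEdgeSet, show Sym2.diagSet = {e : Sym2 (Fin n) | e.IsDiag} from rfl, hdiag, Set.ncard_image_of_injective _ Subtype.val_injective]
  · rintro ⟨H, hH, rfl⟩
    refine ⟨Subtype.val ⁻¹' H.edgeSet, (outerMV_iff _).mpr (not_bad_of_not_copy hH), ?_⟩
    conv_rhs => rw [← image_preimage_val H]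
    rw [Set.ncard_image_of_injective _ Subtype.val_injective]
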